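/- With r := 4/p², the constant κ := max over e' ∈ E of (1/c(e'))·Σ_{e∈E} c(e)·r^{−d(e,e')} satisfies κ ≤ 4/3. -/

import Mathlib

open Finset

noncomputable section

variable {X : Type*} [Fintype X] [DecidableEq X] [Nonempty X]

/-- Dirichlet form `E(f,g) = (1/2) ∑_{x,y} π(x) Q(x,y) (f(x)-f(y))(g(x)-g(y))`. -/
def dirichletForm (π : X → ℝ) (Q : X → X → ℝ) (f g : X → ℝ) : ℝ :=
  (1 / 2) * ∑ x : X, ∑ y : X, π x * Q x y * (f x - f y) * (g x - g y)

/-- Mean `E[f] = ∑_x π(x) f(x)`. -/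
def mean (π : X → ℝ) (f : X → ℝ) : ℝ := ∑ x : X, π x * f x

/-- Entropy `Ent(f) = E[f log f] - E[f] log E[f]`. -/
def entropy (π : X → ℝ) (f : X → ℝ) : ℝ :=
  mean π (fun x => f x * Real.log (f x)) - mean π f * Real.log (mean π f)

/-- Variance `Var(f) = E[f²] - E[f]²`. -/
def variance (π : X → ℝ) (f : X → ℝ) : ℝ :=
  mean π (fun x => f x ^ 2) - (mean π f) ^ 2

/-- Total jump rate `Q(x) = ∑_{y ≠ x} Q(x,y)`. -/
def jumpRate (Q : X → X → ℝ) (x : X) : ℝ := ∑ y ∈ univ.erase x, Q x y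

/-- Sparsity parameter `p = min_{(x,y) ∈ E} Q(x,y) / max(Q(x), Q(y,x))`. -/
def sparsity (Q : X → X → ℝ) : ℝ :=
  sInf {s : ℝ | ∃ x y : X, x ≠ y ∧ 0 < Q x y ∧
    s = Q x y / max (jumpRate Q x) (Q y x)}

/-- The transition graph `(X, E)` (symmetric since under reversibility
`Q(x,y) > 0 ↔ Q(y,x) > 0`). -/
def chainGraph (Q : X → X → ℝ) : SimpleGraph X where
  Adj x y := x ≠ y ∧ (0 < Q x y ∨ 0 < Q y x)
  symm := by constructor; intro x y h; exact ⟨h.1.symm, h.2.symm⟩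
  loopless := by constructor; intro x h; exact h.1 rfl

/-- Graph distance on `(X, E)`. -/
def graphDist (Q : X → X → ℝ) (x y : X) : ℕ := (chainGraph Q).dist x y

/-- Regularization `f⋆(x) = max_z r^{-d(x,z)} f(z)`. -/
def fStar (Q : X → X → ℝ) (r : ℝ) (f : X → ℝ) (x : X) : ℝ :=
  univ.sup' univ_nonempty (fun z => r ^ (-(graphDist Q x z : ℤ)) * f z)

/-- `(x,y)` is an allowed transition. -/
def IsEdge (Q : X → X → ℝ) (e : X × X) : Prop := e.1 ≠ e.2 ∧ 0 < Q e.1 e.2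

/-- The edge set `E = {(x,y) : x ≠ y, Q(x,y) > 0}` as a finset. -/
def edges (Q : X → X → ℝ) : Finset (X × X) :=
  univ.filter (fun e => e.1 ≠ e.2 ∧ 0 < Q e.1 e.2)

/-- Edge weight `c(x,y) = π(x) Q(x,y)`. -/
def edgeWeight (π : X → ℝ) (Q : X → X → ℝ) (e : X × X) : ℝ := π e.1 * Q e.1 e.2

/-- Distance between edges: `d(e,e') = ℓ - 1` where `ℓ` is the minimal length of a
path `(x_0, …, x_ℓ)` with `(x_0,x_1) = e` and `(x_{ℓ-1}, x_ℓ) = e'`. -/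
def edgeDist (Q : X → X → ℝ) (e e' : X × X) : ℕ :=
  sInf {n : ℕ | ∃ c : ℕ → X, c 0 = e.1 ∧ c 1 = e.2 ∧ c n = e'.1 ∧ c (n + 1) = e'.2 ∧
    ∀ i < n + 1, (chainGraph Q).Adj (c i) (c (i + 1))}

/-- `κ = max_{e' ∈ E} (1/c(e')) ∑_{e ∈ E} c(e) r^{-d(e,e')}`. -/
def kappa (π : X → ℝ) (Q : X → X → ℝ) (r : ℝ) : ℝ :=
  sSup {k : ℝ | ∃ e' ∈ edges Q, k = (1 / edgeWeight π Q e') *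
    ∑ e ∈ edges Q, edgeWeight π Q e * r ^ (-(edgeDist Q e e' : ℤ))}

/-- `H(w) = ((√w + 1)/(√w - 1)) log w` for `w ≠ 1`, and `H(1) = 4`. -/
def Hfun (w : ℝ) : ℝ :=
  if w = 1 then 4 else ((Real.sqrt w + 1) / (Real.sqrt w - 1)) * Real.log w

/-- A function is `r`-regular if `f(x) ≤ r f(y)` across every edge. -/
def IsRRegular (Q : X → X → ℝ) (r : ℝ) (f : X → ℝ) : Prop :=
  ∀ x y : X, x ≠ y → 0 < Q x y → f x ≤ r * f y

/-- Maximum degree of the graph `(X, E)`. -/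
def maxDegree (Q : X → X → ℝ) : ℕ :=
  univ.sup (fun x : X => Nat.card {y : X // (chainGraph Q).Adj x y})

/-- Irreducibility: every state can be reached from every other through allowed
transitions. -/
def MarkovIrreducible (Q : X → X → ℝ) : Prop :=
  ∀ x y : X, Relation.ReflTransGen (fun a b => a ≠ b ∧ 0 < Q a b) x y

set_option linter.unusedSectionVars false

lemma mem_edges {Q : X → X → ℝ} {e : X × X} :
    e ∈ edges Q ↔ e.1 ≠ e.2 ∧ 0 < Q e.1 e.2 := by simp [edges]

lemma reflTransGen_chain {R : X → X → Prop} {x y : X} (h : Relation.ReflTransGen R x y) :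
    ∃ n : ℕ, ∃ c : ℕ → X, c 0 = x ∧ c n = y ∧ ∀ i < n, R (c i) (c (i + 1)) := by
  induction h with
  | refl => exact ⟨0, fun _ => x, rfl, rfl, fun i hi => absurd hi (Nat.not_lt_zero i)⟩
  | @tail b z hab hbz ih =>
    obtain ⟨n, c, h0, hn, hadj⟩ := ih
    refine ⟨n + 1, fun i => if i = n + 1 then z else c i, by simp [h0], by simp, ?_⟩
    intro i hi
    rcases Nat.lt_or_ge i n with h' | h'
    · simpa [Nat.ne_of_lt (by omega : i < n+1), Nat.ne_of_lt (by omega : i+1 < n+1), Nat.ne_of_lt h']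
        using hadj i h'
    · have : i = n := by omega
      subst this
      simpa [Nat.ne_of_lt (by omega : i < i+1), hn] using hbz

lemma adj_pos {π : X → ℝ} {Q : X → X → ℝ} (hπpos : ∀ x : X, 0 < π x)
    (hrev : ∀ x y : X, π x * Q x y = π y * Q y x)
    {x y : X} (h : (chainGraph Q).Adj x y) : 0 < Q x y := by
  rcases h.2 with h' | h'
  · exact h'
  · have hp : 0 < π x * Q x y := by rw [hrev]; exact mul_pos (hπpos y) h'
    by_contra hc
    push_neg at hc
    nlinarith [hπpos x]

lemma edgeDistSet_nonempty {Q : X → X → ℝ} (hirr : MarkovIrreducible Q)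
    {e e' : X × X} (he : e ∈ edges Q) (he' : e' ∈ edges Q) :
    {n : ℕ | ∃ c : ℕ → X, c 0 = e.1 ∧ c 1 = e.2 ∧ c n = e'.1 ∧ c (n + 1) = e'.2 ∧
      ∀ i < n + 1, (chainGraph Q).Adj (c i) (c (i + 1))}.Nonempty := by
  obtain ⟨n, c, h0, hn, hadj⟩ := reflTransGen_chain (hirr e.2 e'.1)
  refine ⟨n + 1, fun i => if i = 0 then e.1 else if i ≤ n + 1 then c (i - 1) else e'.2,
    by simp, ?_, ?_, ?_, ?_⟩
  · simp [h0]
  · have h1 : n + 1 ≠ 0 := by omega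
    simp [h1, hn]
  · have h1 : n + 1 + 1 ≠ 0 := by omega
    have h2 : ¬ (n + 1 + 1 ≤ n + 1) := by omega
    simp [h1, h2]
  · intro i hi
    by_cases hi0 : i = 0
    · subst hi0
      have g : (chainGraph Q).Adj e.1 e.2 :=
        ⟨(mem_edges.mp he).1, Or.inl (mem_edges.mp he).2⟩
      simpa [h0, show (1:ℕ) ≤ n + 1 by omega] using g
    · by_cases hin : i = n + 1
      · subst hin
        have g : (chainGraph Q).Adj e'.1 e'.2 :=
          ⟨(mem_edges.mp he').1, Or.inl (mem_edges.mp he').2⟩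
        simpa [hi0, hn, show ¬ (n + 1 + 1 ≤ n + 1) by omega,
          show n + 1 + 1 ≠ 0 by omega] using g
      · have := hadj (i - 1) (by omega)
        have heq : i - 1 + 1 = i := by omega
        rw [heq] at this
        have g : (chainGraph Q).Adj (c (i-1)) (c i) := ⟨this.1, Or.inl this.2⟩
        simpa [hi0, show i ≤ n + 1 by omega, show i + 1 ≠ 0 by omega,
          show i + 1 ≤ n + 1 by omega, show i + 1 - 1 = i by omega] using g

lemma edgeDist_mem {Q : X → X → ℝ} (hirr : MarkovIrreducible Q)
    {e e' : X × X} (he : e ∈ edges Q) (he' : e' ∈ edges Q) :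
    edgeDist Q e e' ∈ {n : ℕ | ∃ c : ℕ → X, c 0 = e.1 ∧ c 1 = e.2 ∧ c n = e'.1 ∧
      c (n + 1) = e'.2 ∧ ∀ i < n + 1, (chainGraph Q).Adj (c i) (c (i + 1))} := by
  rw [edgeDist]
  exact Nat.sInf_mem (edgeDistSet_nonempty hirr he he')

lemma edgeDist_eq_zero {Q : X → X → ℝ} (hirr : MarkovIrreducible Q)
    {e e' : X × X} (he : e ∈ edges Q) (he' : e' ∈ edges Q)
    (h : edgeDist Q e e' = 0) : e = e' := by
  have hmem := edgeDist_mem hirr he he'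
  rw [h] at hmem
  obtain ⟨c, h0, h1, h2, h3, -⟩ := hmem
  exact Prod.ext (by rw [← h0, h2]) (by rw [← h1, h3])

lemma edgeDist_step {π : X → ℝ} {Q : X → X → ℝ} (hirr : MarkovIrreducible Q)
    (hπpos : ∀ x : X, 0 < π x) (hrev : ∀ x y : X, π x * Q x y = π y * Q y x)
    {e e' : X × X} (he : e ∈ edges Q) (he' : e' ∈ edges Q)
    {k : ℕ} (hd : edgeDist Q e e' = k + 1) :
    ∃ f, f ∈ edges Q ∧ f.1 = e.2 ∧ edgeDist Q f e' = k := by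
  have hmem := edgeDist_mem hirr he he'
  rw [hd] at hmem
  obtain ⟨c, h0, h1, h2, h3, hadj⟩ := hmem
  have hadj1 : (chainGraph Q).Adj (c 1) (c 2) := hadj 1 (by omega)
  have hf : (c 1, c 2) ∈ edges Q := mem_edges.mpr ⟨hadj1.1, adj_pos hπpos hrev hadj1⟩
  refine ⟨(c 1, c 2), hf, h1, ?_⟩
  have hub : edgeDist Q (c 1, c 2) e' ≤ k := by
    rw [edgeDist]
    exact Nat.sInf_le ⟨fun i => c (i + 1), rfl, rfl, h2, h3,
      fun i hi => hadj (i + 1) (by omega)⟩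
  have hlb : k ≤ edgeDist Q (c 1, c 2) e' := by
    by_contra hc
    push_neg at hc
    obtain ⟨g, g0, g1, g2, g3, gadj⟩ := edgeDist_mem hirr hf he'
    set m := edgeDist Q (c 1, c 2) e' with hm
    have hmem2 : (m + 1) ∈ {n : ℕ | ∃ c : ℕ → X, c 0 = e.1 ∧ c 1 = e.2 ∧ c n = e'.1 ∧
        c (n + 1) = e'.2 ∧ ∀ i < n + 1, (chainGraph Q).Adj (c i) (c (i + 1))} := by
      refine ⟨fun i => if i = 0 then e.1 else g (i - 1), rfl, ?_, ?_, ?_, ?_⟩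
      · simpa [g0] using h1
      · simp [show m + 1 ≠ 0 by omega, g2]
      · simp [show m + 1 + 1 ≠ 0 by omega, g3]
      · intro i hi
        by_cases hi0 : i = 0
        · subst hi0
          have gadj0 : (chainGraph Q).Adj e.1 e.2 :=
            ⟨(mem_edges.mp he).1, Or.inl (mem_edges.mp he).2⟩
          simpa [g0, h1] using gadj0
        · have := gadj (i - 1) (by omega)
          rw [show i - 1 + 1 = i by omega] at this
          simpa [hi0, show i + 1 ≠ 0 by omega, show i + 1 - 1 = i by omega] using this
    have hle : edgeDist Q e e' ≤ m + 1 := by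
      rw [edgeDist]; exact Nat.sInf_le hmem2
    omega
  omega

lemma edgeWeight_pos {π : X → ℝ} {Q : X → X → ℝ} (hπpos : ∀ x : X, 0 < π x)
    {e : X × X} (he : e ∈ edges Q) : 0 < edgeWeight π Q e :=
  mul_pos (hπpos e.1) (mem_edges.mp he).2

lemma le_jumpRate {Q : X → X → ℝ} (hQ : ∀ x y : X, x ≠ y → 0 ≤ Q x y)
    {x y : X} (hxy : y ≠ x) : Q x y ≤ jumpRate Q x := by
  unfold jumpRate
  apply Finset.single_le_sum (f := fun z => Q x z)
  · intro z hz
    exact hQ x z (fun h => (Finset.mem_erase.mp hz).1 h.symm)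
  · exact Finset.mem_erase.mpr ⟨hxy, Finset.mem_univ y⟩

lemma jumpRate_pos {Q : X → X → ℝ} (hQ : ∀ x y : X, x ≠ y → 0 ≤ Q x y)
    {e : X × X} (he : e ∈ edges Q) : 0 < jumpRate Q e.1 :=
  lt_of_lt_of_le (mem_edges.mp he).2 (le_jumpRate hQ (mem_edges.mp he).1.symm)

lemma fiber_sum_le {π : X → ℝ} {Q : X → X → ℝ}
    (hQ : ∀ x y : X, x ≠ y → 0 ≤ Q x y) (hπpos : ∀ x : X, 0 < π x)
    (hrev : ∀ x y : X, π x * Q x y = π y * Q y x)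
    (b : X) (T : Finset (X × X)) (hT : ∀ e ∈ T, e ∈ edges Q ∧ e.2 = b) :
    ∑ e ∈ T, edgeWeight π Q e ≤ π b * jumpRate Q b := by
  have hsub : T ⊆ (univ.erase b).image (fun a => (a, b)) := by
    intro e he
    obtain ⟨he1, he2⟩ := hT e he
    rw [Finset.mem_image]
    exact ⟨e.1, Finset.mem_erase.mpr ⟨by rw [← he2]; exact (mem_edges.mp he1).1,
      Finset.mem_univ _⟩, by rw [← he2]⟩
  calc ∑ e ∈ T, edgeWeight π Q e
      ≤ ∑ e ∈ (univ.erase b).image (fun a => (a, b)), edgeWeight π Q e := by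
        apply Finset.sum_le_sum_of_subset_of_nonneg hsub
        intro e he _
        rw [Finset.mem_image] at he
        obtain ⟨a, ha, rfl⟩ := he
        exact mul_nonneg (hπpos a).le (hQ a b (Finset.mem_erase.mp ha).1)
    _ = ∑ a ∈ univ.erase b, π a * Q a b := by
        rw [Finset.sum_image]
        · rfl
        · intro a _ a' _ h; exact (Prod.mk.injEq _ _ _ _ ▸ h).1
    _ = ∑ a ∈ univ.erase b, π b * Q b a := Finset.sum_congr rfl fun a _ => hrev a b
    _ = π b * jumpRate Q b := by rw [jumpRate, Finset.mul_sum]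

lemma sparsity_set_eq {Q : X → X → ℝ} :
    {s : ℝ | ∃ x y : X, x ≠ y ∧ 0 < Q x y ∧
      s = Q x y / max (jumpRate Q x) (Q y x)} =
    ↑((edges Q).image (fun e => Q e.1 e.2 / max (jumpRate Q e.1) (Q e.2 e.1))) := by
  ext s
  simp only [Set.mem_setOf_eq, Finset.coe_image, Set.mem_image, Finset.mem_coe]
  constructor
  · rintro ⟨x, y, h1, h2, rfl⟩
    exact ⟨(x, y), mem_edges.mpr ⟨h1, h2⟩, rfl⟩
  · rintro ⟨e, he, rfl⟩
    exact ⟨e.1, e.2, (mem_edges.mp he).1, (mem_edges.mp he).2, rfl⟩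

lemma sparsity_le {Q : X → X → ℝ} {e : X × X} (he : e ∈ edges Q) :
    sparsity Q ≤ Q e.1 e.2 / max (jumpRate Q e.1) (Q e.2 e.1) := by
  rw [sparsity, sparsity_set_eq,
    Finset.Nonempty.csInf_eq_min' (Finset.Nonempty.image ⟨e, he⟩ _)]
  exact Finset.min'_le _ _ (Finset.mem_image_of_mem _ he)

lemma sparsity_pos {Q : X → X → ℝ} (hQ : ∀ x y : X, x ≠ y → 0 ≤ Q x y)
    {e₀ : X × X} (he₀ : e₀ ∈ edges Q) : 0 < sparsity Q := by
  rw [sparsity, sparsity_set_eq,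
    Finset.Nonempty.csInf_eq_min' (Finset.Nonempty.image ⟨e₀, he₀⟩ _)]
  have := Finset.min'_mem ((edges Q).image
    (fun e => Q e.1 e.2 / max (jumpRate Q e.1) (Q e.2 e.1)))
    (Finset.Nonempty.image ⟨e₀, he₀⟩ _)
  rw [Finset.mem_image] at this
  obtain ⟨e, he, hval⟩ := this
  rw [← hval]
  exact div_pos (mem_edges.mp he).2 (lt_max_iff.mpr (Or.inl (jumpRate_pos hQ he)))

lemma sparsity_le_one {Q : X → X → ℝ} (hQ : ∀ x y : X, x ≠ y → 0 ≤ Q x y)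
    {e₀ : X × X} (he₀ : e₀ ∈ edges Q) : sparsity Q ≤ 1 := by
  refine le_trans (sparsity_le he₀) ?_
  rw [div_le_one (lt_max_iff.mpr (Or.inl (jumpRate_pos hQ he₀)))]
  exact le_trans (le_jumpRate hQ (mem_edges.mp he₀).1.symm) (le_max_left _ _)

lemma sparsity_mul_le {Q : X → X → ℝ} (hQ : ∀ x y : X, x ≠ y → 0 ≤ Q x y)
    {e : X × X} (he : e ∈ edges Q) :
    sparsity Q * jumpRate Q e.1 ≤ Q e.1 e.2 := by
  have h1 : sparsity Q ≤ Q e.1 e.2 / jumpRate Q e.1 := by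
    refine le_trans (sparsity_le he) ?_
    apply div_le_div_of_nonneg_left (mem_edges.mp he).2.le (jumpRate_pos hQ he)
    exact le_max_left _ _
  rw [le_div_iff₀ (jumpRate_pos hQ he)] at h1
  linarith

lemma sum_dist_le {π : X → ℝ} {Q : X → X → ℝ}
    (hQ : ∀ x y : X, x ≠ y → 0 ≤ Q x y) (hirr : MarkovIrreducible Q)
    (hπpos : ∀ x : X, 0 < π x) (hrev : ∀ x y : X, π x * Q x y = π y * Q y x)
    {e' : X × X} (he' : e' ∈ edges Q) (k : ℕ) :
    ∑ e ∈ (edges Q).filter (fun e => edgeDist Q e e' = k), edgeWeight π Q e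
      ≤ edgeWeight π Q e' / sparsity Q ^ k := by
  induction k with
  | zero =>
    simp only [pow_zero, div_one]
    have hsub : (edges Q).filter (fun e => edgeDist Q e e' = 0) ⊆ {e'} := by
      intro e he
      rw [Finset.mem_filter] at he
      exact Finset.mem_singleton.mpr (edgeDist_eq_zero hirr he.1 he' he.2)
    calc ∑ e ∈ (edges Q).filter (fun e => edgeDist Q e e' = 0), edgeWeight π Q e
        ≤ ∑ e ∈ {e'}, edgeWeight π Q e := by
          apply Finset.sum_le_sum_of_subset_of_nonneg hsub
          intro e he _
          rw [Finset.mem_singleton] at he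
          subst he
          exact (edgeWeight_pos hπpos he').le
      _ = edgeWeight π Q e' := Finset.sum_singleton _ _
  | succ k ih =>
    have hp : 0 < sparsity Q := sparsity_pos hQ he'
    set S := (edges Q).filter (fun e => edgeDist Q e e' = k + 1) with hS
    set B := S.image Prod.snd with hB
    have hchoice : ∀ b : X, ∃ f : X × X,
        b ∈ B → f ∈ edges Q ∧ f.1 = b ∧ edgeDist Q f e' = k := by
      intro b
      by_cases hb : b ∈ B
      · obtain ⟨e, heS, hbe⟩ := Finset.mem_image.mp hb
        have heE : e ∈ edges Q := (Finset.mem_filter.mp heS).1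
        have hde : edgeDist Q e e' = k + 1 := (Finset.mem_filter.mp heS).2
        obtain ⟨f, hf1, hf2, hf3⟩ := edgeDist_step hirr hπpos hrev heE he' hde
        exact ⟨f, fun _ => ⟨hf1, by rw [hf2, hbe], hf3⟩⟩
      · exact ⟨(b, b), fun h => absurd h hb⟩
    choose F hF using hchoice
    have h1 : ∑ e ∈ S, edgeWeight π Q e
        = ∑ b ∈ B, ∑ e ∈ S.filter (fun e => e.2 = b), edgeWeight π Q e :=
      (Finset.sum_fiberwise_of_maps_to (fun e he => Finset.mem_image_of_mem _ he) _).symm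
    rw [h1]
    have h2 : ∀ b ∈ B, ∑ e ∈ S.filter (fun e => e.2 = b), edgeWeight π Q e
        ≤ edgeWeight π Q (F b) / sparsity Q := by
      intro b hb
      obtain ⟨hFE, hF1, hFd⟩ := hF b hb
      have hfib := fiber_sum_le hQ hπpos hrev b (S.filter (fun e => e.2 = b))
        (fun e he => ⟨(Finset.mem_filter.mp (Finset.mem_filter.mp he).1).1,
          (Finset.mem_filter.mp he).2⟩)
      refine hfib.trans ?_
      have hkey : sparsity Q * jumpRate Q b ≤ Q b (F b).2 := by
        have := sparsity_mul_le hQ hFE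
        rwa [hF1] at this
      have hjw : jumpRate Q b ≤ Q b (F b).2 / sparsity Q := by
        rw [le_div_iff₀ hp]
        linarith
      have : π b * jumpRate Q b ≤ π b * (Q b (F b).2 / sparsity Q) :=
        mul_le_mul_of_nonneg_left hjw (hπpos b).le
      refine this.trans_eq ?_
      rw [edgeWeight, hF1, mul_div_assoc]
    calc ∑ b ∈ B, ∑ e ∈ S.filter (fun e => e.2 = b), edgeWeight π Q e
        ≤ ∑ b ∈ B, edgeWeight π Q (F b) / sparsity Q := Finset.sum_le_sum h2
      _ = (∑ b ∈ B, edgeWeight π Q (F b)) / sparsity Q := by rw [Finset.sum_div]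
      _ ≤ (edgeWeight π Q e' / sparsity Q ^ k) / sparsity Q := by
          refine (div_le_div_iff_of_pos_right hp).mpr ?_
          · calc ∑ b ∈ B, edgeWeight π Q (F b)
                = ∑ f ∈ B.image F, edgeWeight π Q f := by
                  refine (Finset.sum_image ?_).symm
                  intro b hb b' hb' hFF
                  rw [← (hF b hb).2.1, ← (hF b' hb').2.1, hFF]
              _ ≤ ∑ f ∈ (edges Q).filter (fun e => edgeDist Q e e' = k),
                    edgeWeight π Q f := by
                  apply Finset.sum_le_sum_of_subset_of_nonneg
                  · intro f hf
                    obtain ⟨b, hb, rfl⟩ := Finset.mem_image.mp hf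
                    exact Finset.mem_filter.mpr ⟨(hF b hb).1, (hF b hb).2.2⟩
                  · intro f hf _
                    exact (edgeWeight_pos hπpos (Finset.mem_filter.mp hf).1).le
              _ ≤ edgeWeight π Q e' / sparsity Q ^ k := ih
      _ = edgeWeight π Q e' / sparsity Q ^ (k + 1) := by
          rw [div_div, ← pow_succ]


theorem kappa_le
    (π : X → ℝ) (Q : X → X → ℝ)
    (hQ : ∀ x y : X, x ≠ y → 0 ≤ Q x y)
    (hQsum : ∀ x : X, ∑ y : X, Q x y = 0)
    (hirr : MarkovIrreducible Q)
    (hπpos : ∀ x : X, 0 < π x)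
    (hπsum : ∑ x : X, π x = 1)
    (hrev : ∀ x y : X, π x * Q x y = π y * Q y x)
 :
     kappa π Q (4 / sparsity Q ^ 2) ≤ 4 / 3 := by
  rw [kappa]
  apply Real.sSup_le _ (by norm_num)
  intro x hx
  obtain ⟨e', he', rfl⟩ := hx
  have hp : 0 < sparsity Q := sparsity_pos hQ he'
  have hp1 : sparsity Q ≤ 1 := sparsity_le_one hQ he'
  have hc : 0 < edgeWeight π Q e' := edgeWeight_pos hπpos he'
  set p := sparsity Q with hpdef
  have hterm : ∀ e ∈ edges Q,
      edgeWeight π Q e * (4 / p ^ 2) ^ (-(edgeDist Q e e' : ℤ))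
        = edgeWeight π Q e * (p ^ 2 / 4) ^ (edgeDist Q e e') := by
    intro e _
    rw [zpow_neg, zpow_natCast, ← inv_pow, inv_div]
  rw [Finset.sum_congr rfl hterm]
  set M := ((edges Q).sup (fun e => edgeDist Q e e')) + 1 with hM
  have hmaps : ∀ e ∈ edges Q, edgeDist Q e e' ∈ Finset.range M := by
    intro e he
    rw [Finset.mem_range, hM]
    exact Nat.lt_succ_of_le (Finset.le_sup (f := fun e => edgeDist Q e e') he)
  rw [← Finset.sum_fiberwise_of_maps_to hmaps
    (fun e => edgeWeight π Q e * (p ^ 2 / 4) ^ (edgeDist Q e e'))]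
  have hgeom : ∑ k ∈ Finset.range M, ((1:ℝ)/4) ^ k ≤ 4/3 := by
    have h := geom_sum_eq (by norm_num : ((1:ℝ)/4) ≠ 1) M
    rw [h]
    have h2 : (0:ℝ) ≤ (1/4:ℝ) ^ M := by positivity
    rw [div_le_iff_of_neg (by norm_num : ((1:ℝ)/4) - 1 < 0)]
    nlinarith
  have hbound : ∑ k ∈ Finset.range M,
      ∑ e ∈ (edges Q).filter (fun e => edgeDist Q e e' = k),
        edgeWeight π Q e * (p ^ 2 / 4) ^ (edgeDist Q e e')
      ≤ edgeWeight π Q e' * (4/3) := by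
    calc ∑ k ∈ Finset.range M,
        ∑ e ∈ (edges Q).filter (fun e => edgeDist Q e e' = k),
          edgeWeight π Q e * (p ^ 2 / 4) ^ (edgeDist Q e e')
        = ∑ k ∈ Finset.range M,
            (∑ e ∈ (edges Q).filter (fun e => edgeDist Q e e' = k),
              edgeWeight π Q e) * (p ^ 2 / 4) ^ k := by
          refine Finset.sum_congr rfl fun k _ => ?_
          rw [Finset.sum_mul]
          refine Finset.sum_congr rfl fun e he => ?_
          rw [(Finset.mem_filter.mp he).2]
      _ ≤ ∑ k ∈ Finset.range M,
            (edgeWeight π Q e' / p ^ k) * (p ^ 2 / 4) ^ k := by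
          refine Finset.sum_le_sum fun k _ => ?_
          apply mul_le_mul_of_nonneg_right (sum_dist_le hQ hirr hπpos hrev he' k)
          positivity
      _ = ∑ k ∈ Finset.range M, edgeWeight π Q e' * (p/4) ^ k := by
          refine Finset.sum_congr rfl fun k _ => ?_
          rw [div_pow, div_pow, ← pow_mul]
          field_simp
          ring
      _ ≤ ∑ k ∈ Finset.range M, edgeWeight π Q e' * ((1:ℝ)/4) ^ k := by
          refine Finset.sum_le_sum fun k _ => ?_
          apply mul_le_mul_of_nonneg_left _ hc.le
          apply pow_le_pow_left₀ (by positivity) (by linarith)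
      _ = edgeWeight π Q e' * ∑ k ∈ Finset.range M, ((1:ℝ)/4) ^ k := by
          rw [Finset.mul_sum]
      _ ≤ edgeWeight π Q e' * (4/3) := mul_le_mul_of_nonneg_left hgeom hc.le
  calc (1 / edgeWeight π Q e') * ∑ k ∈ Finset.range M,
        ∑ e ∈ (edges Q).filter (fun e => edgeDist Q e e' = k),
          edgeWeight π Q e * (p ^ 2 / 4) ^ (edgeDist Q e e')
      ≤ (1 / edgeWeight π Q e') * (edgeWeight π Q e' * (4/3)) :=
        mul_le_mul_of_nonneg_left hbound (by positivity)
    _ = 4/3 := by field_simp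

end
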